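/- arXiv:math/0701547 — 2 statements merged into one kernel-verified Lean document; each statement's English description precedes it below -/
import Mathlib

section
/- Let p and p' be two distinct vectors of ℝ². Set W = √(1 + ‖p‖²), W' = √(1 + ‖p'‖²), X = p/W, X' = p'/W', and in ℝ² × ℝ set n = (p, −1)/W and n' = (p', −1)/W'. Then ⟨X' − X, p' − p⟩ / ‖p' − p‖ ≥ ‖n' − n‖²/4 ≥ ‖X' − X‖²/4. -/
noncomputable section

/-- `W = √(1 + ‖p‖²)` for a gradient vector `p ∈ ℝ²`. -/
def Wv (p : ℝ × ℝ) : ℝ := Real.sqrt (1 + (p.1 ^ 2 + p.2 ^ 2))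

/-- Horizontal projection `X = p / W` of the downward unit normal of the graph with
gradient `p`. -/
def Xv (p : ℝ × ℝ) : ℝ × ℝ := (p.1 / Wv p, p.2 / Wv p)

/-- The downward unit normal `n = (p, -1)/W ∈ ℝ² × ℝ` of the graph with gradient `p`. -/
def nv (p : ℝ × ℝ) : ℝ × ℝ × ℝ := (p.1 / Wv p, p.2 / Wv p, -1 / Wv p)

/-- Euclidean inner product on `ℝ²`. -/
def ip2 (a b : ℝ × ℝ) : ℝ := a.1 * b.1 + a.2 * b.2

/-- Euclidean inner product on `ℝ² × ℝ`. -/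
def ip3 (a b : ℝ × ℝ × ℝ) : ℝ := a.1 * b.1 + a.2.1 * b.2.1 + a.2.2 * b.2.2

/-- Squared Euclidean norm on `ℝ²`. -/
def nsq2 (a : ℝ × ℝ) : ℝ := a.1 ^ 2 + a.2 ^ 2

/-- Squared Euclidean norm on `ℝ² × ℝ`. -/
def nsq3 (a : ℝ × ℝ × ℝ) : ℝ := a.1 ^ 2 + a.2.1 ^ 2 + a.2.2 ^ 2
set_option maxHeartbeats 1000000 in
/-- **Lemma A.1 (pointwise form).** For two distinct gradient vectors `p ≠ p'` in `ℝ²`,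
with `W = √(1+‖p‖²)`, `X = p/W`, `n = (p,-1)/W` (and similarly for `p'`), one has
`⟨X' - X, p' - p⟩/‖p' - p‖ ≥ ‖n' - n‖²/4 ≥ ‖X' - X‖²/4`. -/
theorem flux_normal_inequality (p p' : ℝ × ℝ) (hne : p ≠ p') :
    ip2 (Xv p' - Xv p) (p' - p) / Real.sqrt (nsq2 (p' - p)) ≥ nsq3 (nv p' - nv p) / 4 ∧
    nsq3 (nv p' - nv p) / 4 ≥ nsq2 (Xv p' - Xv p) / 4 := by
  obtain ⟨a, b⟩ := p
  obtain ⟨c, d⟩ := p'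
  simp only [ip2, Xv, nv, nsq2, nsq3, Prod.mk_sub_mk, Prod.fst, Prod.snd]
  have hW : (0:ℝ) < Wv (a, b) := Real.sqrt_pos.2 (by norm_num; positivity)
  have hW' : (0:ℝ) < Wv (c, d) := Real.sqrt_pos.2 (by norm_num; positivity)
  have hW2 : (Wv (a, b)) ^ 2 = 1 + (a ^ 2 + b ^ 2) := Real.sq_sqrt (by positivity)
  have hW'2 : (Wv (c, d)) ^ 2 = 1 + (c ^ 2 + d ^ 2) := Real.sq_sqrt (by positivity)
  set W := Wv (a, b) with hWdef
  set W' := Wv (c, d) with hW'def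
  -- Cauchy-Schwarz facts
  have hcs : (a*c + b*d + 1)^2 + (a*d - b*c)^2 + (a - c)^2 + (b - d)^2 = (W*W')^2 := by
    have : (W*W')^2 = W^2 * W'^2 := by ring
    rw [this, hW2, hW'2]; ring
  have hWW' : 0 < W * W' := mul_pos hW hW'
  have hS1 : a*c + b*d + 1 ≤ W * W' := by
    nlinarith [sq_nonneg (a*d - b*c), sq_nonneg (a-c), sq_nonneg (b-d)]
  have hS2 : -(W * W') ≤ a*c + b*d + 1 := by
    nlinarith [sq_nonneg (a*d - b*c), sq_nonneg (a-c), sq_nonneg (b-d)]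
  -- distance
  have hdpos : (0:ℝ) < (c - a)^2 + (d - b)^2 := by
    rcases (by simpa [Prod.ext_iff] using hne : ¬(a = c ∧ b = d)) with h
    rcases eq_or_ne a c with rfl | ha
    · have : b ≠ d := by tauto
      have : (d - b) ≠ 0 := by intro h'; apply this; linarith
      positivity
    · have : (c - a) ≠ 0 := by intro h'; apply ha; linarith
      positivity
  have hD : (0:ℝ) < Real.sqrt ((c - a)^2 + (d - b)^2) := Real.sqrt_pos.2 hdpos
  have hD2 : (Real.sqrt ((c - a)^2 + (d - b)^2))^2 = (c - a)^2 + (d - b)^2 :=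
    Real.sq_sqrt hdpos.le
  set D := Real.sqrt ((c - a)^2 + (d - b)^2) with hDdef
  have hDle : D ≤ W + W' := by nlinarith [hD.le]
  -- identities
  set S := a*c + b*d + 1 with hSdef
  have hE : (c / W' - a / W) * (c - a) + (d / W' - b / W) * (d - b)
      = (W + W') * (W * W' - S) / (W * W') := by
    rw [hSdef]
    field_simp
    linear_combination (-W') * hW2 + (-W) * hW'2
  have hF : (c / W' - a / W)^2 + (d / W' - b / W)^2 + (-1 / W' - -1 / W)^2
      = 2 * (W * W' - S) / (W * W') := by
    rw [hSdef]
    field_simp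
    linear_combination (-W'^2) * hW2 + (-W^2) * hW'2
  clear_value W W' D S
  constructor
  · rw [hE, hF, ge_iff_le, div_div, div_div,
      div_le_div_iff₀ (by positivity) (by positivity)]
    have hT : 0 ≤ W * W' - S := by linarith
    have key : 0 ≤ (W * W' * (W * W' - S)) * (4*(W + W') - 2*D) :=
      mul_nonneg (mul_nonneg hWW'.le hT) (by linarith)
    nlinarith [key]
  · have h := sq_nonneg (-1 / W' - -1 / W)
    linarith
end
end

section
/- The function h(x,y) = ln((√(x²+y²) + y)/x), defined on the quadrant Q = {(x,y) ∈ ℝ² : x > 0, y > 0} ⊆ H, is a solution of the minimal surface equation on Q. Moreover h(x,y) → 0 as (x,y) → (x₀,0) within Q for every x₀ > 0, and h(x,y) → +∞ as (x,y) → (0,y₀) within Q for every y₀ > 0; thus h is a minimal graph over the half-plane of H bounded by the geodesic {x = 0} that takes asymptotic value 0 on the ideal boundary arc {y = 0, x > 0} and boundary value +∞ on the geodesic {x = 0, y > 0}. -/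
noncomputable section

open Real Filter Set Topology

/-- Points of the ideal boundary `∂∞H = ℝ ∪ {∞}` of the hyperbolic plane:
`some a` is the point `a ∈ ℝ`, `none` is the point `∞`. -/
abbrev IdealPoint : Type := Option ℝ

/-- The upper half-plane model `H` of the hyperbolic plane. -/
def UHP : Set (ℝ × ℝ) := {p | 0 < p.2}

/-- Inverse hyperbolic cosine. -/
def acosh (x : ℝ) : ℝ := Real.log (x + Real.sqrt (x ^ 2 - 1))

/-- The hyperbolic distance on the upper half-plane. -/
def hdist (p q : ℝ × ℝ) : ℝ :=
  acosh (1 + ((p.1 - q.1) ^ 2 + (p.2 - q.2) ^ 2) / (2 * p.2 * q.2))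

/-- Cyclic successor on `Fin n`. -/
def cyc {n : ℕ} (i : Fin n) : Fin n := ⟨(i.val + 1) % n, Nat.mod_lt _ i.pos⟩

/-- A defining function of the complete geodesic with the given ideal endpoints:
the geodesic is its zero set in `UHP`, and its sign separates the two sides. -/
def geodFn : IdealPoint → IdealPoint → ℝ × ℝ → ℝ
  | some a, some b, p => (p.1 - a) * (p.1 - b) + p.2 ^ 2
  | some a, none, p => p.1 - a
  | none, some b, p => p.1 - b
  | none, none, _ => 1

/-- The complete geodesic of the hyperbolic plane with ideal endpoints `a`, `b`
(a Euclidean semicircle centered on the `x`-axis, or a vertical half-line). -/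
def geodesic (a b : IdealPoint) : Set (ℝ × ℝ) := {p | p ∈ UHP ∧ geodFn a b p = 0}

/-- Sign describing on which side of the geodesic `(a, b)` an ideal point `c` lies. -/
def idealSide : IdealPoint → IdealPoint → IdealPoint → ℝ
  | some a, some b, some c => (c - a) * (c - b)
  | some _, some _, none => 1
  | some a, none, some c => c - a
  | none, some b, some c => c - b
  | _, _, _ => 0

/-- Angle coordinate identifying `∂∞H` with a circle. -/
def idealAngle : IdealPoint → ℝ
  | some x => 2 * Real.arctan x
  | none => Real.pi

/-- The ideal points `d 0, …, d (n-1)` are listed in cyclic order around `∂∞H`. -/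
def InCyclicOrder {n : ℕ} (d : Fin n → IdealPoint) : Prop :=
  (∃ r : Fin n, StrictMono fun i : Fin n => idealAngle (d (i + r))) ∨
  (∃ r : Fin n, StrictAnti fun i : Fin n => idealAngle (d (i + r)))

/-- The open ideal polygonal domain with vertices `d` (in cyclic order): the interior of
the hyperbolic convex hull of the vertices, i.e. the set of points of `UHP` lying strictly
on the same side of each side of the polygon as the remaining vertices. -/
def polyDomain {n : ℕ} (d : Fin n → IdealPoint) : Set (ℝ × ℝ) :=
  {p | p ∈ UHP ∧ ∀ i j : Fin n, j ≠ i → j ≠ cyc i →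
    0 < geodFn (d i) (d (cyc i)) p * idealSide (d i) (d (cyc i)) (d j)}

/-- The side of the ideal polygon with vertices `d` joining `d i` to its cyclic successor. -/
def polySide {n : ℕ} (d : Fin n → IdealPoint) (i : Fin n) : Set (ℝ × ℝ) :=
  geodesic (d i) (d (cyc i))

/-- Partial derivative in the `x`-direction. -/
def pdx (u : ℝ × ℝ → ℝ) (p : ℝ × ℝ) : ℝ := fderiv ℝ u p (1, 0)

/-- Partial derivative in the `y`-direction. -/
def pdy (u : ℝ × ℝ → ℝ) (p : ℝ × ℝ) : ℝ := fderiv ℝ u p (0, 1)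

/-- `W = √(1 + y² (uₓ² + u_y²))` for the vertical graph of `u` in `H × ℝ`. -/
def Wgr (u : ℝ × ℝ → ℝ) (p : ℝ × ℝ) : ℝ :=
  Real.sqrt (1 + p.2 ^ 2 * ((pdx u p) ^ 2 + (pdy u p) ^ 2))

/-- `u` is a solution of the minimal surface equation (for vertical graphs in `H × ℝ`)
on the set `Ω`: `u` is `C²` on `Ω` and `∂ₓ(uₓ/W) + ∂_y(u_y/W) = 0` there. -/
def IsMinimalSol (Ω : Set (ℝ × ℝ)) (u : ℝ × ℝ → ℝ) : Prop :=
  ContDiffOn ℝ 2 u Ω ∧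
  ∀ p ∈ Ω, pdx (fun q => pdx u q / Wgr u q) p + pdy (fun q => pdy u q / Wgr u q) p = 0

/-- `u` takes the boundary value `+∞` on `A` (as a boundary arc of the domain `D`). -/
def BdryPlusInf (D A : Set (ℝ × ℝ)) (u : ℝ × ℝ → ℝ) : Prop :=
  ∀ p ∈ A, Tendsto u (𝓝[D] p) atTop

/-- `u` takes the boundary value `-∞` on `A` (as a boundary arc of the domain `D`). -/
def BdryMinusInf (D A : Set (ℝ × ℝ)) (u : ℝ × ℝ → ℝ) : Prop :=
  ∀ p ∈ A, Tendsto u (𝓝[D] p) atBot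

/-- `u` takes the finite boundary values `f` on `A` (as a boundary arc of the domain `D`). -/
def BdryFinite (D A : Set (ℝ × ℝ)) (u f : ℝ × ℝ → ℝ) : Prop :=
  ∀ p ∈ A, Tendsto u (𝓝[D] p) (𝓝 (f p))

private lemma sqsum_hasFD (p : ℝ × ℝ) :
    HasFDerivAt (fun q : ℝ × ℝ => q.1 ^ 2 + q.2 ^ 2)
      ((p.1 • ContinuousLinearMap.fst ℝ ℝ ℝ + p.1 • ContinuousLinearMap.fst ℝ ℝ ℝ) +
       (p.2 • ContinuousLinearMap.snd ℝ ℝ ℝ + p.2 • ContinuousLinearMap.snd ℝ ℝ ℝ)) p := by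
  have h := ((hasFDerivAt_fst (𝕜 := ℝ) (p := p)).mul (hasFDerivAt_fst (𝕜 := ℝ) (p := p))).add
    ((hasFDerivAt_snd (𝕜 := ℝ) (p := p)).mul (hasFDerivAt_snd (𝕜 := ℝ) (p := p)))
  refine h.congr_of_eventuallyEq (Filter.Eventually.of_forall fun q => ?_)
  simp [pow_two]

private lemma hasFD_main (p : ℝ × ℝ) (hx : 0 < p.1) (hy : 0 < p.2) :
    ∃ D : ℝ × ℝ →L[ℝ] ℝ,
      HasFDerivAt (fun q : ℝ × ℝ => Real.log ((Real.sqrt (q.1 ^ 2 + q.2 ^ 2) + q.2) / q.1)) D p ∧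
      D (1, 0) = -p.2 / (p.1 * Real.sqrt (p.1 ^ 2 + p.2 ^ 2)) ∧
      D (0, 1) = 1 / Real.sqrt (p.1 ^ 2 + p.2 ^ 2) := by
  have hs : 0 < p.1 ^ 2 + p.2 ^ 2 := by positivity
  have hrpos : 0 < Real.sqrt (p.1 ^ 2 + p.2 ^ 2) := Real.sqrt_pos.2 hs
  have hr2 : Real.sqrt (p.1 ^ 2 + p.2 ^ 2) ^ 2 = p.1 ^ 2 + p.2 ^ 2 := Real.sq_sqrt hs.le
  have H2 : HasFDerivAt (fun q : ℝ × ℝ => Real.sqrt (q.1 ^ 2 + q.2 ^ 2)) (_ : ℝ × ℝ →L[ℝ] ℝ) p :=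
    (Real.hasDerivAt_sqrt hs.ne').comp_hasFDerivAt p (sqsum_hasFD p)
  have H3 := H2.add (hasFDerivAt_snd (𝕜 := ℝ) (p := p))
  have Hinv : HasFDerivAt (fun q : ℝ × ℝ => (q.1)⁻¹) (_ : ℝ × ℝ →L[ℝ] ℝ) p :=
    (hasDerivAt_inv hx.ne').comp_hasFDerivAt p (hasFDerivAt_fst (𝕜 := ℝ) (p := p))
  have H5 := H3.mul Hinv
  have hne : (Real.sqrt (p.1 ^ 2 + p.2 ^ 2) + p.2) * (p.1)⁻¹ ≠ 0 := by positivity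
  have H6 := H5.log hne
  have heq : (fun q : ℝ × ℝ => Real.log ((Real.sqrt (q.1 ^ 2 + q.2 ^ 2) + q.2) / q.1)) =
      fun q : ℝ × ℝ => Real.log ((Real.sqrt (q.1 ^ 2 + q.2 ^ 2) + q.2) * (q.1)⁻¹) := by
    funext q; rw [div_eq_mul_inv]
  simp only [Pi.add_apply, Pi.mul_apply] at H6
  rw [← heq] at H6
  refine ⟨_, H6, ?_, ?_⟩ <;>
  · simp only [ContinuousLinearMap.smul_apply, ContinuousLinearMap.add_apply,
      ContinuousLinearMap.coe_fst', ContinuousLinearMap.coe_snd', ContinuousLinearMap.coe_smul',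
      Pi.smul_apply, smul_eq_mul]
    field_simp
    ring_nf
    try linear_combination (-2 * p.1 ^ 3 * Real.sqrt (p.1 ^ 2 + p.2 ^ 2)) * hr2
    try linear_combination (-2) * hr2

private lemma Qopen : IsOpen {p : ℝ × ℝ | 0 < p.1 ∧ 0 < p.2} :=
  (isOpen_lt continuous_const continuous_fst).inter (isOpen_lt continuous_const continuous_snd)

private lemma pd_vals (p : ℝ × ℝ) (hx : 0 < p.1) (hy : 0 < p.2) :
    pdx (fun q : ℝ × ℝ => Real.log ((Real.sqrt (q.1 ^ 2 + q.2 ^ 2) + q.2) / q.1)) p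
        = -p.2 / (p.1 * Real.sqrt (p.1 ^ 2 + p.2 ^ 2)) ∧
    pdy (fun q : ℝ × ℝ => Real.log ((Real.sqrt (q.1 ^ 2 + q.2 ^ 2) + q.2) / q.1)) p
        = 1 / Real.sqrt (p.1 ^ 2 + p.2 ^ 2) := by
  obtain ⟨D, hD, h1, h2⟩ := hasFD_main p hx hy
  unfold pdx pdy
  rw [hD.fderiv]
  exact ⟨h1, h2⟩

private lemma Wgr_val (p : ℝ × ℝ) (hx : 0 < p.1) (hy : 0 < p.2) :
    Wgr (fun q : ℝ × ℝ => Real.log ((Real.sqrt (q.1 ^ 2 + q.2 ^ 2) + q.2) / q.1)) p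
      = Real.sqrt (p.1 ^ 2 + p.2 ^ 2) / p.1 := by
  have hs : 0 < p.1 ^ 2 + p.2 ^ 2 := by positivity
  have hrpos : 0 < Real.sqrt (p.1 ^ 2 + p.2 ^ 2) := Real.sqrt_pos.2 hs
  have hr2 : Real.sqrt (p.1 ^ 2 + p.2 ^ 2) ^ 2 = p.1 ^ 2 + p.2 ^ 2 := Real.sq_sqrt hs.le
  obtain ⟨h1, h2⟩ := pd_vals p hx hy
  unfold Wgr
  rw [h1, h2]
  set r := Real.sqrt (p.1 ^ 2 + p.2 ^ 2) with hrdef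
  have key : 1 + p.2 ^ 2 * ((-p.2 / (p.1 * r)) ^ 2 + (1 / r) ^ 2) = (r / p.1) ^ 2 := by
    rw [div_pow, div_pow, div_pow, mul_pow, hr2]
    field_simp
    ring
  rw [key, Real.sqrt_sq (by positivity)]

private lemma ratio_vals (p : ℝ × ℝ) (hx : 0 < p.1) (hy : 0 < p.2) :
    pdx (fun q : ℝ × ℝ => Real.log ((Real.sqrt (q.1 ^ 2 + q.2 ^ 2) + q.2) / q.1)) p /
        Wgr (fun q : ℝ × ℝ => Real.log ((Real.sqrt (q.1 ^ 2 + q.2 ^ 2) + q.2) / q.1)) p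
        = -p.2 * (p.1 ^ 2 + p.2 ^ 2)⁻¹ ∧
    pdy (fun q : ℝ × ℝ => Real.log ((Real.sqrt (q.1 ^ 2 + q.2 ^ 2) + q.2) / q.1)) p /
        Wgr (fun q : ℝ × ℝ => Real.log ((Real.sqrt (q.1 ^ 2 + q.2 ^ 2) + q.2) / q.1)) p
        = p.1 * (p.1 ^ 2 + p.2 ^ 2)⁻¹ := by
  have hs : 0 < p.1 ^ 2 + p.2 ^ 2 := by positivity
  have hrpos : 0 < Real.sqrt (p.1 ^ 2 + p.2 ^ 2) := Real.sqrt_pos.2 hs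
  have hr2 : Real.sqrt (p.1 ^ 2 + p.2 ^ 2) ^ 2 = p.1 ^ 2 + p.2 ^ 2 := Real.sq_sqrt hs.le
  obtain ⟨h1, h2⟩ := pd_vals p hx hy
  rw [h1, h2, Wgr_val p hx hy]
  set r := Real.sqrt (p.1 ^ 2 + p.2 ^ 2) with hrdef
  constructor
  · have : -p.2 / (p.1 * r) / (r / p.1) = -p.2 * (r ^ 2)⁻¹ := by
      field_simp
      try ring
      try tauto
    rw [this, hr2]
  · have : 1 / r / (r / p.1) = p.1 * (r ^ 2)⁻¹ := by
      field_simp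
      try ring
      try tauto
    rw [this, hr2]

/-- The function `h(x,y) = ln((√(x²+y²) + y)/x)` is a solution of the minimal surface
equation on the quadrant `Q = {x > 0, y > 0} ⊆ H`; it tends to `0` at every ideal
boundary point `(x₀, 0)` with `x₀ > 0`, and to `+∞` at every point `(0, y₀)`, `y₀ > 0`,
of the geodesic `{x = 0}`. -/
theorem abresch_barrier :
    IsMinimalSol {p : ℝ × ℝ | 0 < p.1 ∧ 0 < p.2}
      (fun p => Real.log ((Real.sqrt (p.1 ^ 2 + p.2 ^ 2) + p.2) / p.1)) ∧
    (∀ x₀ : ℝ, 0 < x₀ →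
      Tendsto (fun p : ℝ × ℝ => Real.log ((Real.sqrt (p.1 ^ 2 + p.2 ^ 2) + p.2) / p.1))
        (𝓝[{p : ℝ × ℝ | 0 < p.1 ∧ 0 < p.2}] (x₀, 0)) (𝓝 0)) ∧
    (∀ y₀ : ℝ, 0 < y₀ →
      Tendsto (fun p : ℝ × ℝ => Real.log ((Real.sqrt (p.1 ^ 2 + p.2 ^ 2) + p.2) / p.1))
        (𝓝[{p : ℝ × ℝ | 0 < p.1 ∧ 0 < p.2}] (0, y₀)) atTop) := by
  refine ⟨⟨?_, ?_⟩, ?_, ?_⟩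
  · -- ContDiffOn
    intro p hp
    obtain ⟨hx, hy⟩ := hp
    have hs : 0 < p.1 ^ 2 + p.2 ^ 2 := by positivity
    have hrpos : 0 < Real.sqrt (p.1 ^ 2 + p.2 ^ 2) := Real.sqrt_pos.2 hs
    have c1 : ContDiffAt ℝ 2 (fun q : ℝ × ℝ => q.1 ^ 2 + q.2 ^ 2) p :=
      (((contDiff_fst (𝕜 := ℝ)).pow 2).add ((contDiff_snd (𝕜 := ℝ)).pow 2)).contDiffAt
    have c2 : ContDiffAt ℝ 2
        (fun q : ℝ × ℝ => (Real.sqrt (q.1 ^ 2 + q.2 ^ 2) + q.2) / q.1) p :=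
      ((c1.sqrt hs.ne').add (contDiff_snd (𝕜 := ℝ)).contDiffAt).div
        (contDiff_fst (𝕜 := ℝ)).contDiffAt hx.ne'
    exact (c2.log (by positivity)).contDiffWithinAt
  · -- PDE
    intro p hp
    obtain ⟨hx, hy⟩ := hp
    have hs : 0 < p.1 ^ 2 + p.2 ^ 2 := by positivity
    have hmem : {q : ℝ × ℝ | 0 < q.1 ∧ 0 < q.2} ∈ 𝓝 p := Qopen.mem_nhds ⟨hx, hy⟩
    have hev1 : (fun q : ℝ × ℝ =>
        pdx (fun q : ℝ × ℝ => Real.log ((Real.sqrt (q.1 ^ 2 + q.2 ^ 2) + q.2) / q.1)) q /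
        Wgr (fun q : ℝ × ℝ => Real.log ((Real.sqrt (q.1 ^ 2 + q.2 ^ 2) + q.2) / q.1)) q)
        =ᶠ[𝓝 p] fun q : ℝ × ℝ => -q.2 * (q.1 ^ 2 + q.2 ^ 2)⁻¹ :=
      Filter.eventually_of_mem hmem fun q hq => (ratio_vals q hq.1 hq.2).1
    have hev2 : (fun q : ℝ × ℝ =>
        pdy (fun q : ℝ × ℝ => Real.log ((Real.sqrt (q.1 ^ 2 + q.2 ^ 2) + q.2) / q.1)) q /
        Wgr (fun q : ℝ × ℝ => Real.log ((Real.sqrt (q.1 ^ 2 + q.2 ^ 2) + q.2) / q.1)) q)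
        =ᶠ[𝓝 p] fun q : ℝ × ℝ => q.1 * (q.1 ^ 2 + q.2 ^ 2)⁻¹ :=
      Filter.eventually_of_mem hmem fun q hq => (ratio_vals q hq.1 hq.2).2
    have Hinv2 : HasFDerivAt (fun q : ℝ × ℝ => (q.1 ^ 2 + q.2 ^ 2)⁻¹)
        (_ : ℝ × ℝ →L[ℝ] ℝ) p :=
      (hasDerivAt_inv hs.ne').comp_hasFDerivAt p (sqsum_hasFD p)
    have Hphi1 := ((hasFDerivAt_snd (𝕜 := ℝ) (p := p)).neg).mul Hinv2
    simp only [Pi.mul_def, Pi.neg_apply] at Hphi1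
    have Hphi2 := (hasFDerivAt_fst (𝕜 := ℝ) (p := p)).mul Hinv2
    simp only [Pi.mul_def] at Hphi2
    have e1 : pdx (fun q : ℝ × ℝ =>
        pdx (fun q : ℝ × ℝ => Real.log ((Real.sqrt (q.1 ^ 2 + q.2 ^ 2) + q.2) / q.1)) q /
        Wgr (fun q : ℝ × ℝ => Real.log ((Real.sqrt (q.1 ^ 2 + q.2 ^ 2) + q.2) / q.1)) q) p =
        fderiv ℝ (fun q : ℝ × ℝ => -q.2 * (q.1 ^ 2 + q.2 ^ 2)⁻¹) p (1, 0) := by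
      show fderiv ℝ _ p (1, 0) = _
      rw [hev1.fderiv_eq]
    have e2 : pdy (fun q : ℝ × ℝ =>
        pdy (fun q : ℝ × ℝ => Real.log ((Real.sqrt (q.1 ^ 2 + q.2 ^ 2) + q.2) / q.1)) q /
        Wgr (fun q : ℝ × ℝ => Real.log ((Real.sqrt (q.1 ^ 2 + q.2 ^ 2) + q.2) / q.1)) q) p =
        fderiv ℝ (fun q : ℝ × ℝ => q.1 * (q.1 ^ 2 + q.2 ^ 2)⁻¹) p (0, 1) := by
      show fderiv ℝ _ p (0, 1) = _
      rw [hev2.fderiv_eq]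
    rw [e1, e2, Hphi1.fderiv, Hphi2.fderiv]
    simp only [ContinuousLinearMap.smul_apply, ContinuousLinearMap.add_apply,
      ContinuousLinearMap.coe_fst', ContinuousLinearMap.coe_snd', ContinuousLinearMap.coe_smul',
      ContinuousLinearMap.neg_apply, Pi.smul_apply, smul_eq_mul]
    field_simp
    ring
  · -- limit at (x₀, 0)
    intro x₀ hx₀
    have hne : ((x₀ : ℝ), (0 : ℝ)).1 ≠ 0 := by simpa using hx₀.ne'
    have hca : ContinuousAt
        (fun p : ℝ × ℝ => (Real.sqrt (p.1 ^ 2 + p.2 ^ 2) + p.2) / p.1) (x₀, 0) := by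
      have hnum : Continuous fun p : ℝ × ℝ => Real.sqrt (p.1 ^ 2 + p.2 ^ 2) + p.2 :=
        (Real.continuous_sqrt.comp ((continuous_fst.pow 2).add (continuous_snd.pow 2))).add
          continuous_snd
      exact hnum.continuousAt.div continuous_fst.continuousAt hne
    have hval : (Real.sqrt (((x₀ : ℝ), (0 : ℝ)).1 ^ 2 + ((x₀ : ℝ), (0 : ℝ)).2 ^ 2) +
        ((x₀ : ℝ), (0 : ℝ)).2) / ((x₀ : ℝ), (0 : ℝ)).1 = 1 := by
      simp [Real.sqrt_sq hx₀.le]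
      simp [abs_of_pos hx₀, hx₀.ne']
    have hlog : ContinuousAt
        (fun p : ℝ × ℝ => Real.log ((Real.sqrt (p.1 ^ 2 + p.2 ^ 2) + p.2) / p.1)) (x₀, 0) := by
      refine hca.log ?_
      rw [hval]
      exact one_ne_zero
    have := hlog.tendsto.mono_left (nhdsWithin_le_nhds (s := {p : ℝ × ℝ | 0 < p.1 ∧ 0 < p.2}))
    rwa [hval, Real.log_one] at this
  · -- limit at (0, y₀)
    intro y₀ hy₀
    have hnum : Tendsto (fun p : ℝ × ℝ => Real.sqrt (p.1 ^ 2 + p.2 ^ 2) + p.2)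
        (𝓝[{p : ℝ × ℝ | 0 < p.1 ∧ 0 < p.2}] (0, y₀)) (𝓝 (2 * y₀)) := by
      have hc : Continuous fun p : ℝ × ℝ => Real.sqrt (p.1 ^ 2 + p.2 ^ 2) + p.2 :=
        (Real.continuous_sqrt.comp ((continuous_fst.pow 2).add (continuous_snd.pow 2))).add
          continuous_snd
      have := (hc.continuousAt (x := ((0 : ℝ), y₀))).tendsto.mono_left (nhdsWithin_le_nhds (s := {p : ℝ × ℝ | 0 < p.1 ∧ 0 < p.2}))
      simpa [Real.sqrt_sq hy₀.le, two_mul] using this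
    have hinv : Tendsto (fun p : ℝ × ℝ => (p.1)⁻¹)
        (𝓝[{p : ℝ × ℝ | 0 < p.1 ∧ 0 < p.2}] (0, y₀)) atTop := by
      refine tendsto_inv_nhdsGT_zero.comp ?_
      rw [tendsto_nhdsWithin_iff]
      constructor
      · have := (continuous_fst.tendsto ((0 : ℝ), y₀)).mono_left
          (nhdsWithin_le_nhds (s := {p : ℝ × ℝ | 0 < p.1 ∧ 0 < p.2}))
        simpa using this
      · exact eventually_nhdsWithin_of_forall fun q hq => hq.1
    have hdiv : Tendsto (fun p : ℝ × ℝ => (Real.sqrt (p.1 ^ 2 + p.2 ^ 2) + p.2) * (p.1)⁻¹)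
        (𝓝[{p : ℝ × ℝ | 0 < p.1 ∧ 0 < p.2}] (0, y₀)) atTop :=
      hnum.pos_mul_atTop (by positivity) hinv
    have := Real.tendsto_log_atTop.comp hdiv
    simpa [Function.comp_def, div_eq_mul_inv] using this
end
end
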